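/- arXiv:2602.10584 — 2 statements merged into one kernel-verified Lean document; each statement's English description precedes it below -/
import Mathlib

section
/- Let n be a positive integer and for each i < n let μ_i and ν_i be probability measures on a measurable space α_i, and let ε_i ≥ 0, δ_i ≥ 0 be reals such that μ_i(S) ≤ e^{ε_i}·ν_i(S) + δ_i for every measurable S ⊆ α_i. Then the product measures satisfy (⊗_i μ_i)(S) ≤ e^{∑_i ε_i}·(⊗_i ν_i)(S) + ∑_i δ_i for every measurable set S in the product space. That is, basic composition of n independent mechanisms that are each (ε_i, δ_i)-indistinguishable yields (∑ε_i, ∑δ_i)-indistinguishability. -/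
open MeasureTheory ENNReal Set

/-- Key layer-cake lemma: the setwise DP inequality extends to lintegrals of
functions bounded by 1. -/
lemma dp_lintegral_aux {α : Type*} [MeasurableSpace α] (μ ν : Measure α)
    (e' d' : ℝ≥0∞)
    (h : ∀ S : Set α, MeasurableSet S → μ S ≤ e' * ν S + d')
    {g : α → ℝ≥0∞} (hg : Measurable g) (hg1 : ∀ x, g x ≤ 1) :
    ∫⁻ x, g x ∂μ ≤ e' * ∫⁻ x, g x ∂ν + d' := by
  set f : α → ℝ := fun x => (g x).toReal with hf
  have hfm : Measurable f := hg.ennreal_toReal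
  have hfg : ∀ x, ENNReal.ofReal (f x) = g x := fun x =>
    ENNReal.ofReal_toReal (lt_of_le_of_lt (hg1 x) one_lt_top).ne
  have hmeas : ∀ (ρ : Measure α), Measurable fun t : ℝ => ρ {a | t < f a} := fun ρ =>
    Antitone.measurable (fun _ _ hst => measure_mono (fun _ hx => lt_of_le_of_lt hst hx))
  have hkey : ∀ (ρ : Measure α), ∫⁻ x, g x ∂ρ = ∫⁻ t in Ioi (0:ℝ), ρ {a | t < f a} := by
    intro ρ
    have h1 : ∫⁻ x, g x ∂ρ = ∫⁻ x, ENNReal.ofReal (f x) ∂ρ :=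
      lintegral_congr fun x => (hfg x).symm
    rw [h1]
    exact lintegral_eq_lintegral_meas_lt ρ
      (Filter.Eventually.of_forall fun x => ENNReal.toReal_nonneg) hfm.aemeasurable
  have hempty : ∀ t : ℝ, 1 ≤ t → {a | t < f a} = ∅ := by
    intro t ht
    ext a
    simp only [mem_setOf_eq, mem_empty_iff_false, iff_false, not_lt]
    calc f a ≤ (1:ℝ≥0∞).toReal := ENNReal.toReal_mono one_ne_top (hg1 a)
      _ = 1 := by simp
      _ ≤ t := ht
  have hsplit : ∀ (ρ : Measure α),
      ∫⁻ t in Ioi (0:ℝ), ρ {a | t < f a} = ∫⁻ t in Ioc (0:ℝ) 1, ρ {a | t < f a} := by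
    intro ρ
    rw [← Ioc_union_Ioi_eq_Ioi (zero_le_one (α := ℝ)),
      lintegral_union measurableSet_Ioi (Ioc_disjoint_Ioi le_rfl)]
    have : ∫⁻ t in Ioi (1:ℝ), ρ {a | t < f a} = 0 := by
      rw [setLIntegral_congr_fun measurableSet_Ioi
        (show EqOn (fun t : ℝ => ρ {a | t < f a}) (fun _ => (0:ℝ≥0∞)) (Ioi 1) from fun t ht => by
          show ρ {a | t < f a} = 0; rw [hempty t (le_of_lt ht), measure_empty])]
      simp
    rw [this, add_zero]
  rw [hkey μ, hkey ν, hsplit μ, hsplit ν]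
  have hmle : ∀ t ∈ Ioc (0:ℝ) 1, μ {a | t < f a} ≤ e' * ν {a | t < f a} + d' := by
    intro t _
    exact h _ (measurableSet_lt measurable_const hfm)
  calc ∫⁻ t in Ioc (0:ℝ) 1, μ {a | t < f a}
      ≤ ∫⁻ t in Ioc (0:ℝ) 1, (e' * ν {a | t < f a} + d') :=
        setLIntegral_mono_ae (((hmeas ν).const_mul e').add measurable_const).aemeasurable
          (Filter.Eventually.of_forall hmle)
    _ = e' * (∫⁻ t in Ioc (0:ℝ) 1, ν {a | t < f a}) + d' * volume (Ioc (0:ℝ) 1) := by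
        rw [lintegral_add_right _ measurable_const, lintegral_const_mul _ (hmeas ν),
          lintegral_const, Measure.restrict_apply_univ]
    _ = e' * (∫⁻ t in Ioc (0:ℝ) 1, ν {a | t < f a}) + d' := by
        rw [Real.volume_Ioc]
        norm_num

/-- Composition for a product of two measures. -/
lemma dp_prod_aux {α β : Type*} [MeasurableSpace α] [MeasurableSpace β]
    (μ₁ ν₁ : Measure α) (μ₂ ν₂ : Measure β)
    [IsProbabilityMeasure μ₁] [IsProbabilityMeasure ν₁]
    [IsProbabilityMeasure μ₂] [IsProbabilityMeasure ν₂]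
    (e₁ e₂ d₁ d₂ : ℝ≥0∞)
    (h₁ : ∀ S : Set α, MeasurableSet S → μ₁ S ≤ e₁ * ν₁ S + d₁)
    (h₂ : ∀ S : Set β, MeasurableSet S → μ₂ S ≤ e₂ * ν₂ S + d₂) :
    ∀ S : Set (α × β), MeasurableSet S →
      (μ₁.prod μ₂) S ≤ e₁ * e₂ * (ν₁.prod ν₂) S + (d₁ + d₂) := by
  intro S hS
  set g : α → ℝ≥0∞ := fun x => min (e₂ * ν₂ (Prod.mk x ⁻¹' S)) 1 with hgdef
  have hslice_ν : Measurable fun x => ν₂ (Prod.mk x ⁻¹' S) :=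
    measurable_measure_prodMk_left hS
  have hgm : Measurable g := (hslice_ν.const_mul e₂).min measurable_const
  have hg1 : ∀ x, g x ≤ 1 := fun x => min_le_right _ _
  -- pointwise bound for the slices of μ
  have hpt : ∀ x, μ₂ (Prod.mk x ⁻¹' S) ≤ g x + d₂ := by
    intro x
    have h2 := h₂ (Prod.mk x ⁻¹' S) (measurable_prodMk_left hS)
    rcases le_total (e₂ * ν₂ (Prod.mk x ⁻¹' S)) 1 with hle | hle
    · rw [hgdef]; simp only [min_eq_left hle]; exact h2
    · calc μ₂ (Prod.mk x ⁻¹' S) ≤ 1 := prob_le_one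
        _ ≤ g x + d₂ := by rw [hgdef]; simp [min_eq_right hle]
  calc (μ₁.prod μ₂) S = ∫⁻ x, μ₂ (Prod.mk x ⁻¹' S) ∂μ₁ := Measure.prod_apply hS
    _ ≤ ∫⁻ x, (g x + d₂) ∂μ₁ := lintegral_mono hpt
    _ = (∫⁻ x, g x ∂μ₁) + d₂ := by
        rw [lintegral_add_right _ measurable_const, lintegral_const, measure_univ, mul_one]
    _ ≤ (e₁ * ∫⁻ x, g x ∂ν₁ + d₁) + d₂ :=
        add_le_add_left (dp_lintegral_aux μ₁ ν₁ e₁ d₁ h₁ hgm hg1) d₂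
    _ ≤ (e₁ * (e₂ * (ν₁.prod ν₂) S) + d₁) + d₂ := by
        gcongr
        calc ∫⁻ x, g x ∂ν₁ ≤ ∫⁻ x, e₂ * ν₂ (Prod.mk x ⁻¹' S) ∂ν₁ :=
              lintegral_mono fun x => min_le_left _ _
          _ = e₂ * ∫⁻ x, ν₂ (Prod.mk x ⁻¹' S) ∂ν₁ := lintegral_const_mul _ hslice_ν
          _ = e₂ * (ν₁.prod ν₂) S := by rw [Measure.prod_apply hS]
    _ = e₁ * e₂ * (ν₁.prod ν₂) S + (d₁ + d₂) := by ring

universe u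

/-- DP composition for finite products, by induction on the number of factors. -/
lemma dp_pi_aux : ∀ (n : ℕ) {α : Fin n → Type u} [∀ i, MeasurableSpace (α i)]
    (μ ν : ∀ i, Measure (α i)) (hμ : ∀ i, IsProbabilityMeasure (μ i))
    (hν : ∀ i, IsProbabilityMeasure (ν i))
    (ε δ : Fin n → ℝ) (hδ : ∀ i, 0 ≤ δ i)
    (h : ∀ i, ∀ S : Set (α i), MeasurableSet S →
      μ i S ≤ ENNReal.ofReal (Real.exp (ε i)) * ν i S + ENNReal.ofReal (δ i)),
    ∀ S : Set (∀ i, α i), MeasurableSet S →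
      Measure.pi μ S ≤ ENNReal.ofReal (Real.exp (∑ i, ε i)) * Measure.pi ν S +
        ENNReal.ofReal (∑ i, δ i) := by
  intro n
  induction n with
  | zero =>
    intro α _ μ ν hμ hν ε δ hδ h S hS
    rcases Set.eq_empty_or_nonempty S with rfl | hne
    · simp
    · rw [hne.eq_univ, Measure.pi_univ, Measure.pi_univ]
      simp
  | succ n ih =>
    intro α _ μ ν hμ hν ε δ hδ h S hS
    haveI : ∀ i, IsProbabilityMeasure (μ i) := hμ
    haveI : ∀ i, IsProbabilityMeasure (ν i) := hν
    set e := MeasurableEquiv.piFinSuccAbove α 0 with he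
    have hpre : e ⁻¹' (e.symm ⁻¹' S) = S := by ext x; exact Iff.of_eq (congrArg (· ∈ S) (e.symm_apply_apply x))
    have happ : ∀ (ρ : ∀ i, Measure (α i)), (∀ i, SigmaFinite (ρ i)) →
        Measure.pi ρ S =
          ((ρ 0).prod (Measure.pi fun j => ρ ((0 : Fin (n+1)).succAbove j)))
            (e.symm ⁻¹' S) := by
      intro ρ hsf
      haveI := hsf
      rw [← (MeasureTheory.measurePreserving_piFinSuccAbove ρ 0).map_eq,
        MeasurableEquiv.map_apply, hpre]
    rw [happ μ (fun i => inferInstance), happ ν (fun i => inferInstance)]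
    have hT : MeasurableSet (e.symm ⁻¹' S) := e.symm.measurable hS
    have ihh := ih (fun j => μ ((0 : Fin (n+1)).succAbove j))
      (fun j => ν ((0 : Fin (n+1)).succAbove j)) (fun j => hμ _) (fun j => hν _)
      (fun j => ε ((0 : Fin (n+1)).succAbove j)) (fun j => δ ((0 : Fin (n+1)).succAbove j))
      (fun j => hδ _) (fun j => h _)
    have main := dp_prod_aux (μ 0) (ν 0)
      (Measure.pi fun j => μ ((0 : Fin (n+1)).succAbove j))
      (Measure.pi fun j => ν ((0 : Fin (n+1)).succAbove j))
      (ENNReal.ofReal (Real.exp (ε 0)))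
      (ENNReal.ofReal (Real.exp (∑ j, ε ((0 : Fin (n+1)).succAbove j))))
      (ENNReal.ofReal (δ 0)) (ENNReal.ofReal (∑ j, δ ((0 : Fin (n+1)).succAbove j)))
      (h 0) ihh (e.symm ⁻¹' S) hT
    refine le_trans main (le_of_eq ?_)
    rw [Fin.sum_univ_succAbove ε 0, Fin.sum_univ_succAbove δ 0, Real.exp_add,
      ENNReal.ofReal_mul (Real.exp_nonneg _),
      ENNReal.ofReal_add (hδ 0) (Finset.sum_nonneg fun j _ => hδ _)]

theorem dp_basic_composition {n : ℕ} (hn : 0 < n) {α : Fin n → Type*}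
    [∀ i, MeasurableSpace (α i)] (μ ν : ∀ i, Measure (α i))
    [∀ i, IsProbabilityMeasure (μ i)] [∀ i, IsProbabilityMeasure (ν i)]
    (ε δ : Fin n → ℝ) (hε : ∀ i, 0 ≤ ε i) (hδ : ∀ i, 0 ≤ δ i)
    (h : ∀ i, ∀ S : Set (α i), MeasurableSet S →
      μ i S ≤ ENNReal.ofReal (Real.exp (ε i)) * ν i S + ENNReal.ofReal (δ i)) :
    ∀ S : Set (∀ i, α i), MeasurableSet S →
      Measure.pi μ S ≤ ENNReal.ofReal (Real.exp (∑ i, ε i)) * Measure.pi ν S +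
        ENNReal.ofReal (∑ i, δ i) :=
  dp_pi_aux n μ ν (fun i => inferInstance) (fun i => inferInstance) ε δ hδ h
end

section
/- Let ε ∈ (0, 1), δ ∈ (0, 1), C > 0, and let σ ≥ √(2·ln(1.25/δ))/ε. Then for all μ, μ' ∈ ℝ with |μ − μ'| ≤ C and every measurable set S ⊆ ℝ, the Gaussian measures with standard deviation σC satisfy N(μ, σ²C²)(S) ≤ e^{ε}·N(μ', σ²C²)(S) + δ. That is, the one-dimensional Gaussian mechanism with sensitivity bound C and noise standard deviation σC is (ε, δ)-differentially private. -/
open MeasureTheory ProbabilityTheory Real Set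
open scoped NNReal ENNReal

namespace GaussDP

/-- Reflection about the mean preserves the Gaussian measure. -/
lemma gauss_reflect (m : ℝ) (v : ℝ≥0) :
    (gaussianReal m v).map (fun x => 2*m - x) = gaussianReal m v := by
  have hfn : (fun x : ℝ => 2*m - x) = (fun y => y + 2*m) ∘ (fun x => (-1) * x) := by
    funext x; simp; ring
  rw [hfn, ← Measure.map_map (by fun_prop) (by fun_prop),
    gaussianReal_map_const_mul, gaussianReal_map_add_const]
  congr 1
  · ring
  · ext
    norm_num

lemma gauss_Iio_eq_Ioi (m : ℝ) (v : ℝ≥0) {b : ℝ} :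
    gaussianReal m v (Iio (m - b)) = gaussianReal m v (Ioi (m + b)) := by
  conv_lhs => rw [← gauss_reflect m v]
  rw [Measure.map_apply (by fun_prop) measurableSet_Iio]
  congr 1
  ext x
  simp only [mem_preimage, mem_Iio, mem_Ioi]
  constructor <;> intro <;> linarith

/-- The measure of `{x | m < x}` is 1/2. -/
lemma gauss_Ioi_self (m : ℝ) {v : ℝ≥0} (hv : v ≠ 0) :
    gaussianReal m v (Ioi m) = 1/2 := by
  have hsing : gaussianReal m v {m} = 0 :=
    (gaussianReal_absolutelyContinuous m hv) (Real.volume_singleton)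
  have hIic : gaussianReal m v (Iic m) = gaussianReal m v (Ioi m) := by
    have h1 : gaussianReal m v (Iic m) = gaussianReal m v (Iio m) + gaussianReal m v {m} := by
      rw [← measure_union (by simp) (measurableSet_singleton m), Iio_union_right]
    have h2 : gaussianReal m v (Iio m) = gaussianReal m v (Ioi m) := by
      have := gauss_Iio_eq_Ioi (v := v) (m := m) (b := 0)
      simpa using this
    rw [h1, h2, hsing, add_zero]
  have hcompl : gaussianReal m v (Iic m) + gaussianReal m v (Ioi m) = 1 := by
    rw [← measure_union (by simp [disjoint_left]) measurableSet_Ioi, Iic_union_Ioi]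
    exact measure_univ
  rw [hIic, ← two_mul] at hcompl
  rw [ENNReal.eq_div_iff (by norm_num) (by norm_num), hcompl]

lemma gauss_Iio_self (m : ℝ) {v : ℝ≥0} (hv : v ≠ 0) :
    gaussianReal m v (Iio m) = 1/2 := by
  have := gauss_Iio_eq_Ioi (v := v) (m := m) (b := 0)
  simp only [sub_zero, add_zero] at this
  rw [this, gauss_Ioi_self m hv]

/-- Gaussian tail bound: `P(X > m + b) ≤ exp(-b²/(2v))/2` for `b ≥ 0`. -/
lemma gauss_tail_Ioi (m : ℝ) {v : ℝ≥0} (hv : v ≠ 0) {b : ℝ} (hb : 0 ≤ b) :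
    gaussianReal m v (Ioi (m + b)) ≤ ENNReal.ofReal (Real.exp (-b^2/(2*v)) / 2) := by
  have hv0 : (0:ℝ) < v := lt_of_le_of_ne v.coe_nonneg (by exact_mod_cast hv.symm)
  have h2v : (0:ℝ) < 2*v := by linarith
  have hpt : ∀ x ∈ Ioi (m + b), gaussianPDF m v x ≤
      ENNReal.ofReal (Real.exp (-b^2/(2*v))) * gaussianPDF (m + b) v x := by
    intro x hx
    simp only [mem_Ioi] at hx
    rw [gaussianPDF, gaussianPDF, ← ENNReal.ofReal_mul (Real.exp_nonneg _)]
    apply ENNReal.ofReal_le_ofReal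
    unfold gaussianPDFReal
    have hexp : -(x - m) ^ 2 / (2 * (v:ℝ)) ≤ -b^2/(2*v) + -(x - (m+b))^2/(2*v) := by
      have key : (-(x - m)^2) - (-b^2 + -(x - (m+b))^2) ≤ 0 := by nlinarith
      have expand : -(x - m) ^ 2 / (2 * (v:ℝ)) =
          (-b^2/(2*v) + -(x - (m+b))^2/(2*v)) + ((-(x - m)^2) - (-b^2 + -(x - (m+b))^2))/(2*v) := by
        ring
      have hd : ((-(x - m)^2) - (-b^2 + -(x - (m+b))^2))/(2*(v:ℝ)) ≤ 0 :=
        div_nonpos_of_nonpos_of_nonneg key (le_of_lt h2v)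
      linarith [expand.le, expand.ge]
    calc (Real.sqrt (2*π*v))⁻¹ * Real.exp (-(x - m) ^ 2 / (2 * v))
        ≤ (Real.sqrt (2*π*v))⁻¹ * (Real.exp (-b^2/(2*v)) * Real.exp (-(x - (m+b))^2/(2*v))) := by
          rw [← Real.exp_add]
          exact mul_le_mul_of_nonneg_left (Real.exp_le_exp.mpr hexp) (by positivity)
      _ = Real.exp (-b^2/(2*v)) * ((Real.sqrt (2*π*v))⁻¹ * Real.exp (-(x - (m+b))^2/(2*v))) := by
          ring
  calc gaussianReal m v (Ioi (m + b))
      = ∫⁻ x in Ioi (m+b), gaussianPDF m v x := gaussianReal_apply m hv _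
    _ ≤ ∫⁻ x in Ioi (m+b), ENNReal.ofReal (Real.exp (-b^2/(2*v))) * gaussianPDF (m + b) v x :=
        setLIntegral_mono (measurable_const.mul (measurable_gaussianPDF _ _)) hpt
    _ = ENNReal.ofReal (Real.exp (-b^2/(2*v))) * ∫⁻ x in Ioi (m+b), gaussianPDF (m + b) v x :=
        lintegral_const_mul _ (measurable_gaussianPDF _ _)
    _ = ENNReal.ofReal (Real.exp (-b^2/(2*v))) * gaussianReal (m+b) v (Ioi (m+b)) := by
        rw [gaussianReal_apply _ hv]
    _ = ENNReal.ofReal (Real.exp (-b^2/(2*v))) * ENNReal.ofReal (1/2) := by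
        rw [gauss_Ioi_self _ hv]
        congr 1
        rw [ENNReal.ofReal_div_of_pos (by norm_num)]
        norm_num
    _ = ENNReal.ofReal (Real.exp (-b^2/(2*v)) / 2) := by
        rw [← ENNReal.ofReal_mul (Real.exp_nonneg _), mul_one_div]

lemma gauss_tail_Iio (m : ℝ) {v : ℝ≥0} (hv : v ≠ 0) {b : ℝ} (hb : 0 ≤ b) :
    gaussianReal m v (Iio (m - b)) ≤ ENNReal.ofReal (Real.exp (-b^2/(2*v)) / 2) := by
  rw [gauss_Iio_eq_Ioi]; exact gauss_tail_Ioi m hv hb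

/-- Density of the Gaussian is bounded by `(√(2πv))⁻¹`. -/
lemma gauss_set_bound (m : ℝ) {v : ℝ≥0} (hv : v ≠ 0) (s : Set ℝ) :
    gaussianReal m v s ≤ ENNReal.ofReal (Real.sqrt (2*π*v))⁻¹ * volume s := by
  rw [gaussianReal_apply m hv]
  calc ∫⁻ x in s, gaussianPDF m v x ≤ ∫⁻ _ in s, ENNReal.ofReal (Real.sqrt (2*π*v))⁻¹ := by
        apply lintegral_mono
        intro x
        apply ENNReal.ofReal_le_ofReal
        unfold gaussianPDFReal
        have h1 : Real.exp (-(x - m)^2/(2*v)) ≤ 1 := by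
          apply Real.exp_le_one_iff.mpr
          have hv0 : (0:ℝ) < v := lt_of_le_of_ne v.coe_nonneg (by exact_mod_cast hv.symm)
          apply div_nonpos_of_nonpos_of_nonneg (neg_nonpos.mpr (sq_nonneg _)) (by linarith)
        calc (Real.sqrt (2*π*v))⁻¹ * Real.exp (-(x - m)^2/(2*v))
            ≤ (Real.sqrt (2*π*v))⁻¹ * 1 := by
              apply mul_le_mul_of_nonneg_left h1 (by positivity)
          _ = (Real.sqrt (2*π*v))⁻¹ := mul_one _
    _ = ENNReal.ofReal (Real.sqrt (2*π*v))⁻¹ * volume s := setLIntegral_const s _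

lemma halfline_pos (m aa ww : ℝ) (hw : 0 < ww) :
    {x : ℝ | aa < ww * (x - m)} = Ioi (m + aa/ww) := by
  ext x
  simp only [mem_setOf_eq, mem_Ioi]
  rw [mul_comm, ← div_lt_iff₀ hw]
  constructor <;> intro <;> linarith

lemma halfline_neg (m aa ww : ℝ) (hw : 0 < ww) :
    {x : ℝ | aa < -ww * (x - m)} = Iio (m - aa/ww) := by
  ext x
  simp only [mem_setOf_eq, mem_Iio]
  rw [show -ww * (x - m) = (m - x) * ww by ring, ← div_lt_iff₀ hw]
  constructor <;> intro <;> linarith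

lemma exp_half_le : Real.exp (1/2) ≤ 2.5 := by
  have h1 : Real.exp (1/2) * Real.exp (1/2) = Real.exp 1 := by
    rw [← Real.exp_add]; norm_num
  nlinarith [Real.exp_one_lt_d9, Real.exp_pos (1/2 : ℝ)]

lemma log_125 : (0.18:ℝ) ≤ Real.log 1.25 := by
  have h := Real.add_one_le_exp (-(0.18:ℝ))
  rw [Real.exp_neg] at h
  have hp := Real.exp_pos (0.18:ℝ)
  have h2 : Real.exp 0.18 * (Real.exp 0.18)⁻¹ = 1 := mul_inv_cancel₀ hp.ne'
  have h1 : Real.exp 0.18 ≤ 1.25 := by nlinarith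
  calc (0.18:ℝ) = Real.log (Real.exp 0.18) := (Real.log_exp _).symm
    _ ≤ Real.log 1.25 := Real.log_le_log (Real.exp_pos _) h1

set_option maxHeartbeats 1000000 in
lemma key_large (L ε σ C w δ : ℝ) (hL : 1/4 ≤ L) (hε0 : 0 < ε) (hε1 : ε ≤ 1)
    (hσ0 : 0 < σ) (hC : 0 < C) (hw0 : 0 < w) (hwC : w ≤ C)
    (hεσ : Real.sqrt (2*L) ≤ ε*σ)
    (hδ : Real.exp (-L) * 1.25 = δ) :
    0 ≤ ε*(σ^2*C^2)/w - w/2 ∧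
      Real.exp (-(ε*(σ^2*C^2)/w - w/2)^2/(2*(σ^2*C^2))) / 2 ≤ δ := by
  set s := Real.sqrt (2*L) with hs
  set b := ε*(σ^2*C^2)/w - w/2 with hbdef
  have hs2 : s^2 = 2*L := Real.sq_sqrt (by linarith)
  have hs0 : 0 < s := Real.sqrt_pos.mpr (by linarith)
  have hσL : s ≤ σ := by nlinarith
  have hq0 : 0 ≤ s - 1/(2*s) := by
    rw [sub_nonneg, div_le_iff₀ (by linarith)]
    nlinarith
  have hb1 : ε*(σ^2*C^2)/C ≤ ε*(σ^2*C^2)/w :=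
    div_le_div_of_nonneg_left (by positivity) hw0 hwC
  have hbC : ε*(σ^2*C^2)/C = ε*σ^2*C := by field_simp
  have hb2 : C*(ε*σ^2 - 1/2) ≤ b := by
    rw [hbdef]; nlinarith [hb1]
  have hq : σ*C*(s - 1/(2*s)) ≤ C*(ε*σ^2 - 1/2) := by
    have h1 : s*(σ*C) ≤ (ε*σ)*(σ*C) := mul_le_mul_of_nonneg_right hεσ (by positivity)
    have h2 : C/2 ≤ σ*C/(2*s) := by
      rw [div_le_div_iff₀ (by norm_num) (by positivity)]
      nlinarith
    have hexp : σ*C*(s - 1/(2*s)) = s*(σ*C) - σ*C/(2*s) := by field_simp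
    nlinarith
  have hq2 : 0 ≤ σ*C*(s - 1/(2*s)) := mul_nonneg (by positivity) hq0
  have hb0 : 0 ≤ b := le_trans hq2 (le_trans hq hb2)
  refine ⟨hb0, ?_⟩
  have h5 : s^2 - 1 ≤ (s - 1/(2*s))^2 := by
    have hx : (s - 1/(2*s))^2 = s^2 - 1 + (1/(2*s))^2 := by field_simp; ring
    nlinarith [sq_nonneg (1/(2*s))]
  have hqb : σ*C*(s - 1/(2*s)) ≤ b := le_trans hq hb2
  have hbb : L - 1/2 ≤ b^2/(2*(σ^2*C^2)) := by
    rw [le_div_iff₀ (by positivity)]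
    have hA : σ^2*C^2*(s^2-1) ≤ σ^2*C^2*((s - 1/(2*s))^2) :=
      mul_le_mul_of_nonneg_left h5 (by positivity)
    calc (L - 1/2)*(2*(σ^2*C^2)) = σ^2*C^2*(s^2-1) := by rw [hs2]; ring
      _ ≤ σ^2*C^2*((s - 1/(2*s))^2) := hA
      _ = (σ*C*(s - 1/(2*s)))^2 := by ring
      _ ≤ b^2 := pow_le_pow_left₀ hq2 hqb 2
  have hmono : Real.exp (-b^2/(2*(σ^2*C^2))) ≤ Real.exp (1/2 - L) := by
    apply Real.exp_le_exp.mpr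
    have hh : -b^2/(2*(σ^2*C^2)) = -(b^2/(2*(σ^2*C^2))) := by ring
    rw [hh]
    linarith
  have hsplit : Real.exp (1/2 - L) = Real.exp (1/2) * Real.exp (-L) := by
    rw [← Real.exp_add]; ring_nf
  have hexpneg : 0 < Real.exp (-L) := Real.exp_pos _
  calc Real.exp (-b^2/(2*(σ^2*C^2))) / 2 ≤ Real.exp (1/2 - L) / 2 := by linarith
    _ = Real.exp (1/2) * Real.exp (-L) / 2 := by rw [hsplit]
    _ ≤ 2.5 * Real.exp (-L) / 2 := by nlinarith [exp_half_le]
    _ = Real.exp (-L) * 1.25 := by ring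
    _ = δ := hδ

lemma key_small (L σ C δ : ℝ) (hL14 : L ≤ 1/4) (hL18 : 0.18 ≤ L)
    (hσL : Real.sqrt (2*L) ≤ σ) (hC : 0 < C)
    (hδ : Real.exp (-L) * 1.25 = δ) :
    1/2 + (C/2) * (Real.sqrt (2*π*(σ^2*C^2)))⁻¹ ≤ δ ∧ 1/2 ≤ δ := by
  have hδ9 : 0.9375 ≤ δ := by nlinarith [Real.add_one_le_exp (-L)]
  have hσ6 : (0.6:ℝ) ≤ σ := by
    refine le_trans ?_ hσL
    rw [Real.le_sqrt (by norm_num) (by linarith)]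
    nlinarith
  have hsplit : Real.sqrt (2*π*(σ^2*C^2)) = Real.sqrt (2*π) * (σ*C) := by
    rw [show 2*π*(σ^2*C^2) = (2*π)*(σ*C)^2 by ring, Real.sqrt_mul (by positivity),
      Real.sqrt_sq (by positivity)]
  have h2pi : (2.5:ℝ) ≤ Real.sqrt (2*π) := by
    rw [Real.le_sqrt (by norm_num) (by positivity)]
    nlinarith [Real.pi_gt_d6]
  have hsqrt : 1.5*C ≤ Real.sqrt (2*π*(σ^2*C^2)) := by
    rw [hsplit]
    have h1 : (0.6:ℝ)*C ≤ σ*C := mul_le_mul_of_nonneg_right hσ6 hC.le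
    have h2 : (2.5:ℝ)*(0.6*C) ≤ Real.sqrt (2*π)*(σ*C) :=
      mul_le_mul h2pi h1 (by positivity) (by positivity)
    linarith
  have hstrip : (C/2) * (Real.sqrt (2*π*(σ^2*C^2)))⁻¹ ≤ 1/3 := by
    have hinv : (Real.sqrt (2*π*(σ^2*C^2)))⁻¹ ≤ (1.5*C)⁻¹ :=
      inv_anti₀ (by positivity) hsqrt
    calc (C/2) * (Real.sqrt (2*π*(σ^2*C^2)))⁻¹ ≤ (C/2) * (1.5*C)⁻¹ :=
          mul_le_mul_of_nonneg_left hinv (by positivity)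
      _ = 1/3 := by field_simp; ring
  constructor
  · linarith
  · linarith

end GaussDP

open GaussDP

set_option maxHeartbeats 1000000 in
theorem gaussian_mechanism_dp (ε δ C σ : ℝ) (hε : ε ∈ Set.Ioo (0 : ℝ) 1)
    (hδ : δ ∈ Set.Ioo (0 : ℝ) 1) (hC : 0 < C)
    (hσ : Real.sqrt (2 * Real.log (1.25 / δ)) / ε ≤ σ) :
    ∀ μ μ' : ℝ, |μ - μ'| ≤ C → ∀ S : Set ℝ, MeasurableSet S →
      gaussianReal μ (Real.toNNReal (σ ^ 2 * C ^ 2)) S ≤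
        ENNReal.ofReal (Real.exp ε) *
            gaussianReal μ' (Real.toNNReal (σ ^ 2 * C ^ 2)) S +
          ENNReal.ofReal δ := by
  obtain ⟨hε0, hε1⟩ := hε
  obtain ⟨hδ0, hδ1⟩ := hδ
  intro μ μ' hΔC S hS
  set L := Real.log (1.25/δ) with hLdef
  have hratio : (1:ℝ) < 1.25/δ := by rw [lt_div_iff₀ hδ0]; linarith
  have hL0 : 0 < L := Real.log_pos hratio
  have hexpL : Real.exp L = 1.25/δ := Real.exp_log (by linarith)
  have hδL : Real.exp (-L) * 1.25 = δ := by
    rw [Real.exp_neg, hexpL]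
    field_simp
  have hL18 : (0.18:ℝ) ≤ L := by
    refine le_trans log_125 ?_
    rw [hLdef]
    exact Real.log_le_log (by norm_num) (by rw [le_div_iff₀ hδ0]; nlinarith)
  have hsq0 : 0 < Real.sqrt (2*L) := Real.sqrt_pos.mpr (by linarith)
  have hσ0 : 0 < σ := lt_of_lt_of_le (by positivity) hσ
  have hεσ : Real.sqrt (2*L) ≤ ε*σ := by
    rw [div_le_iff₀ hε0] at hσ
    linarith [hσ]
  have hσL : Real.sqrt (2*L) ≤ σ := by nlinarith
  set v : ℝ≥0 := Real.toNNReal (σ^2*C^2) with hvdef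
  have hvR : ((v : ℝ≥0) : ℝ) = σ^2*C^2 := Real.coe_toNNReal _ (by positivity)
  have hvpos : (0:ℝ) < (v:ℝ) := by rw [hvR]; positivity
  have hv0 : v ≠ 0 := by
    intro h
    rw [h] at hvpos
    simp at hvpos
  by_cases hμeq : μ = μ'
  · subst hμeq
    have h1 : gaussianReal μ v S ≤ ENNReal.ofReal (Real.exp ε) * gaussianReal μ v S :=
      le_mul_of_one_le_left (zero_le)
        (by rw [← ENNReal.ofReal_one]; exact ENNReal.ofReal_le_ofReal (Real.one_le_exp hε0.le))
    exact le_trans h1 le_self_add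
  -- main case
  set Δ := μ - μ' with hΔdef
  have hΔne : Δ ≠ 0 := sub_ne_zero.mpr hμeq
  set a := ε*(v:ℝ) - Δ^2/2 with hadef
  set B := {x : ℝ | a < Δ * (x - μ)} with hBdef
  have hBx : ∀ x : ℝ, x ∈ B ↔ a < Δ * (x - μ) := fun x => Iff.rfl
  set w := |Δ| with hwdef
  have hw0 : 0 < w := abs_pos.mpr hΔne
  have hwC : w ≤ C := hΔC
  have hΔsq : Δ^2 = w^2 := (sq_abs Δ).symm
  clear_value w B a Δ v
  -- Step 1: decomposition into good and bad regions
  have hstep1 : gaussianReal μ v S ≤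
      ENNReal.ofReal (Real.exp ε) * gaussianReal μ' v S + gaussianReal μ v B := by
    have hdiff : gaussianReal μ v (S \ B) ≤ ENNReal.ofReal (Real.exp ε) * gaussianReal μ' v S := by
      rw [gaussianReal_apply μ hv0, gaussianReal_apply μ' hv0]
      have hpt : ∀ x ∈ S \ B, gaussianPDF μ v x ≤
          ENNReal.ofReal (Real.exp ε) * gaussianPDF μ' v x := by
        intro x hx
        have hxB : Δ * (x - μ) ≤ a := not_lt.mp (by simpa [hBdef] using hx.2)
        rw [gaussianPDF, gaussianPDF, ← ENNReal.ofReal_mul (Real.exp_nonneg _)]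
        apply ENNReal.ofReal_le_ofReal
        unfold gaussianPDFReal
        have hexp : -(x - μ) ^ 2 / (2 * (v:ℝ)) ≤ ε + -(x - μ') ^ 2 / (2 * v) := by
          have hxx : (x - μ') = (x - μ) + Δ := by rw [hΔdef]; ring
          have hsq : (x - μ')^2 - (x - μ)^2 = 2*(Δ*(x-μ)) + Δ^2 := by rw [hxx]; ring
          have hkey : (x - μ')^2 - (x - μ)^2 ≤ 2*(v:ℝ)*ε := by
            rw [hsq]
            linarith [hxB, hadef.le, hadef.ge]
          have h2v : (0:ℝ) < 2*(v:ℝ) := by linarith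
          have hdivle : ((x - μ')^2 - (x - μ)^2) / (2*(v:ℝ)) ≤ ε := by
            rw [div_le_iff₀ h2v]; linarith
          have expand : -(x - μ) ^ 2 / (2 * (v:ℝ)) =
              -(x - μ') ^ 2 / (2 * (v:ℝ)) + ((x - μ')^2 - (x - μ)^2) / (2*(v:ℝ)) := by ring
          linarith [expand.le, expand.ge]
        calc (Real.sqrt (2*π*v))⁻¹ * Real.exp (-(x - μ) ^ 2 / (2 * v))
            ≤ (Real.sqrt (2*π*v))⁻¹ * (Real.exp ε * Real.exp (-(x - μ') ^ 2 / (2 * v))) := by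
              rw [← Real.exp_add]
              exact mul_le_mul_of_nonneg_left (Real.exp_le_exp.mpr hexp) (by positivity)
          _ = Real.exp ε * ((Real.sqrt (2*π*v))⁻¹ * Real.exp (-(x - μ') ^ 2 / (2 * v))) := by ring
      calc ∫⁻ x in S \ B, gaussianPDF μ v x
          ≤ ∫⁻ x in S \ B, ENNReal.ofReal (Real.exp ε) * gaussianPDF μ' v x :=
            setLIntegral_mono (measurable_const.mul (measurable_gaussianPDF _ _)) hpt
        _ ≤ ∫⁻ x in S, ENNReal.ofReal (Real.exp ε) * gaussianPDF μ' v x :=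
            lintegral_mono_set diff_subset
        _ = ENNReal.ofReal (Real.exp ε) * ∫⁻ x in S, gaussianPDF μ' v x :=
            lintegral_const_mul _ (measurable_gaussianPDF _ _)
    calc gaussianReal μ v S ≤ gaussianReal μ v (S ∩ B) + gaussianReal μ v (S \ B) :=
          measure_le_inter_add_diff _ _ _
      _ ≤ gaussianReal μ v B + ENNReal.ofReal (Real.exp ε) * gaussianReal μ' v S :=
          add_le_add (measure_mono inter_subset_right) hdiff
      _ = ENNReal.ofReal (Real.exp ε) * gaussianReal μ' v S + gaussianReal μ v B := add_comm _ _
  -- Step 2: the bad region has small measure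
  have hstep2 : gaussianReal μ v B ≤ ENNReal.ofReal δ := by
    have hΔcase := hΔne.lt_or_gt
    have hawdiv : a/w = ε*(v:ℝ)/w - w/2 := by
      rw [hadef, hΔsq, sub_div]
      congr 1
      rw [pow_two]
      field_simp
    have hhalf_of : (1/2 : ℝ≥0∞) = ENNReal.ofReal (1/2) := by
      rw [ENNReal.ofReal_div_of_pos (by norm_num)]
      norm_num
    rcases lt_or_ge (1/4 : ℝ) L with hL14 | hL14
    · -- large L : Gaussian tail bound
      obtain ⟨hb0, hbδ⟩ := key_large L ε σ C w δ hL14.le hε0 hε1.le hσ0 hC hw0 hwC hεσ hδL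
      have hbform : a/w = ε*(σ^2*C^2)/w - w/2 := by rw [hawdiv, hvR]
      have hb0' : 0 ≤ a/w := by rw [hbform]; exact hb0
      have hbδ' : Real.exp (-(a/w)^2/(2*(v:ℝ))) / 2 ≤ δ := by
        rw [hbform, hvR]; exact hbδ
      rcases hΔcase with hΔneg | hΔpos
      · have hΔw : Δ = -w := by rw [hwdef, abs_of_neg hΔneg]; ring
        have hBeq : B = Iio (μ - a/w) := by
          rw [hBdef]
          simp only [hΔw]
          exact halfline_neg μ a w hw0
        rw [hBeq]
        exact le_trans (gauss_tail_Iio μ hv0 hb0') (ENNReal.ofReal_le_ofReal hbδ')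
      · have hΔw : Δ = w := by rw [hwdef, abs_of_pos hΔpos]
        have hBeq : B = Ioi (μ + a/w) := by
          rw [hBdef]
          simp only [hΔw]
          exact halfline_pos μ a w hw0
        rw [hBeq]
        exact le_trans (gauss_tail_Ioi μ hv0 hb0') (ENNReal.ofReal_le_ofReal hbδ')
    · -- small L
      obtain ⟨hkey1, hkey2⟩ := key_small L σ C δ hL14 hL18 hσL hC hδL
      rcases le_or_gt 0 a with ha0 | ha0
      · -- the bad region lies beyond the mean
        have hhalf : gaussianReal μ v B ≤ 1/2 := by
          rcases hΔcase with hΔneg | hΔpos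
          · have hsub : B ⊆ Iio μ := by
              intro x hx
              rw [hBx x] at hx
              rw [mem_Iio]
              nlinarith
            exact le_trans (measure_mono hsub) (le_of_eq (gauss_Iio_self μ hv0))
          · have hsub : B ⊆ Ioi μ := by
              intro x hx
              rw [hBx x] at hx
              rw [mem_Ioi]
              nlinarith
            exact le_trans (measure_mono hsub) (le_of_eq (gauss_Ioi_self μ hv0))
        refine le_trans hhalf ?_
        rw [hhalf_of]
        exact ENNReal.ofReal_le_ofReal (by linarith)
      · -- a < 0 : half-space plus a strip around the mean
        have hstrip_le : -(a/w) ≤ C/2 := by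
          have h2 : 0 < ε*(v:ℝ)/w := by positivity
          rw [hawdiv]
          have h3 : w/2 ≤ C/2 := by linarith
          linarith
        have hkey1' : 1/2 + (C/2) * (Real.sqrt (2*π*(v:ℝ)))⁻¹ ≤ δ := by
          rw [hvR]; exact hkey1
        have hstrip_meas : ∀ I : Set ℝ, volume I ≤ ENNReal.ofReal (C/2) →
            gaussianReal μ v I ≤ ENNReal.ofReal ((C/2) * (Real.sqrt (2*π*(v:ℝ)))⁻¹) := by
          intro I hI
          refine le_trans (gauss_set_bound μ hv0 I) ?_
          calc ENNReal.ofReal (Real.sqrt (2*π*(v:ℝ)))⁻¹ * volume I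
              ≤ ENNReal.ofReal (Real.sqrt (2*π*(v:ℝ)))⁻¹ * ENNReal.ofReal (C/2) :=
                mul_le_mul_right hI _
            _ = ENNReal.ofReal ((C/2) * (Real.sqrt (2*π*(v:ℝ)))⁻¹) := by
                rw [← ENNReal.ofReal_mul (by positivity), mul_comm]
        have hfinal : gaussianReal μ v B ≤
            ENNReal.ofReal (1/2) + ENNReal.ofReal ((C/2) * (Real.sqrt (2*π*(v:ℝ)))⁻¹) := by
          rcases hΔcase with hΔneg | hΔpos
          · have hΔw : Δ = -w := by rw [hwdef, abs_of_neg hΔneg]; ring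
            have hBeq : B = Iio (μ - a/w) := by
              rw [hBdef]
              simp only [hΔw]
              exact halfline_neg μ a w hw0
            have hsub : B ⊆ Iio μ ∪ Ico μ (μ - a/w) := by
              rw [hBeq]
              intro x hx
              rw [mem_Iio] at hx
              rcases lt_or_ge x μ with h | h
              · exact Or.inl h
              · exact Or.inr ⟨h, hx⟩
            calc gaussianReal μ v B ≤ gaussianReal μ v (Iio μ) + gaussianReal μ v (Ico μ (μ - a/w)) :=
                  le_trans (measure_mono hsub) (measure_union_le _ _)
              _ ≤ ENNReal.ofReal (1/2) + ENNReal.ofReal ((C/2) * (Real.sqrt (2*π*(v:ℝ)))⁻¹) := by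
                  apply add_le_add
                  · rw [gauss_Iio_self μ hv0, hhalf_of]
                  · apply hstrip_meas
                    rw [Real.volume_Ico]
                    apply ENNReal.ofReal_le_ofReal
                    linarith [hstrip_le]
          · have hΔw : Δ = w := by rw [hwdef, abs_of_pos hΔpos]
            have hBeq : B = Ioi (μ + a/w) := by
              rw [hBdef]
              simp only [hΔw]
              exact halfline_pos μ a w hw0
            have hsub : B ⊆ Ioc (μ + a/w) μ ∪ Ioi μ := by
              rw [hBeq]
              intro x hx
              rw [mem_Ioi] at hx
              rcases le_or_gt x μ with h | h
              · exact Or.inl ⟨hx, h⟩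
              · exact Or.inr h
            calc gaussianReal μ v B ≤
                gaussianReal μ v (Ioc (μ + a/w) μ) + gaussianReal μ v (Ioi μ) :=
                  le_trans (measure_mono hsub) (measure_union_le _ _)
              _ ≤ ENNReal.ofReal ((C/2) * (Real.sqrt (2*π*(v:ℝ)))⁻¹) + ENNReal.ofReal (1/2) := by
                  apply add_le_add
                  · apply hstrip_meas
                    rw [Real.volume_Ioc]
                    apply ENNReal.ofReal_le_ofReal
                    linarith [hstrip_le]
                  · rw [gauss_Ioi_self μ hv0, hhalf_of]
              _ = ENNReal.ofReal (1/2) + ENNReal.ofReal ((C/2) * (Real.sqrt (2*π*(v:ℝ)))⁻¹) :=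
                  add_comm _ _
        refine le_trans hfinal ?_
        rw [← ENNReal.ofReal_add (by norm_num) (by positivity)]
        exact ENNReal.ofReal_le_ofReal hkey1'
  calc gaussianReal μ v S ≤
      ENNReal.ofReal (Real.exp ε) * gaussianReal μ' v S + gaussianReal μ v B := hstep1
    _ ≤ ENNReal.ofReal (Real.exp ε) * gaussianReal μ' v S + ENNReal.ofReal δ :=
        add_le_add_right hstep2 _
end
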